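/- For every μ ≠ 0 and every ε ∈ (0,1), there exists a constant c₀ > 0 such that the function G(α) = Φ(Φ⁻¹(α/2) − μ) + Φ(Φ⁻¹(α/2) + μ) satisfies G''(α) ≤ −c₀ for all α ∈ (0, 1−ε); that is, G is strongly concave on (0, 1−ε). -/

import Mathlib

/-- The standard normal cumulative distribution function. -/
noncomputable def Phi (x : ℝ) : ℝ :=
  ∫ t in Set.Iic x, (Real.sqrt (2 * Real.pi))⁻¹ * Real.exp (-t ^ 2 / 2)

/-- The inverse of the standard normal CDF, mapping (0,1) onto ℝ. -/
noncomputable def PhiInv : ℝ → ℝ := Function.invFun Phi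

open Real Set Filter MeasureTheory Topology intervalIntegral

namespace Stmt5Aux

noncomputable def phi (t : ℝ) : ℝ := (Real.sqrt (2 * Real.pi))⁻¹ * Real.exp (-t ^ 2 / 2)

lemma sqrt2pi_pos : 0 < Real.sqrt (2 * Real.pi) := Real.sqrt_pos.2 (by positivity)

lemma phi_pos (t : ℝ) : 0 < phi t :=
  mul_pos (inv_pos.2 sqrt2pi_pos) (Real.exp_pos _)

lemma phi_le (t : ℝ) : phi t ≤ (Real.sqrt (2 * Real.pi))⁻¹ := by
  have h : Real.exp (-t ^ 2 / 2) ≤ 1 := Real.exp_le_one_iff.2 (by nlinarith [sq_nonneg t])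
  have := inv_pos.2 sqrt2pi_pos
  calc phi t = (Real.sqrt (2 * Real.pi))⁻¹ * Real.exp (-t ^ 2 / 2) := rfl
    _ ≤ (Real.sqrt (2 * Real.pi))⁻¹ * 1 := by nlinarith
    _ = _ := mul_one _

lemma phi_cont : Continuous phi := by
  unfold phi; fun_prop

lemma phi_integrable : Integrable phi := by
  have h := (integrable_exp_neg_mul_sq (by norm_num : (0:ℝ) < 1/2)).const_mul
      (Real.sqrt (2 * Real.pi))⁻¹
  have : phi = fun t : ℝ => (Real.sqrt (2 * Real.pi))⁻¹ * Real.exp (-(1/2) * t ^ 2) := by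
    funext t; unfold phi; congr 1; ring_nf
  rw [this]; exact h

lemma phi_integral : ∫ t, phi t = 1 := by
  have h : ∫ t : ℝ, Real.exp (-(1/2) * t ^ 2) = Real.sqrt (2 * Real.pi) := by
    rw [integral_gaussian]
    have h' : (2:ℝ) * Real.pi = Real.pi / (1/2) := by ring
    rw [h']
  have h2 : ∫ t, phi t = (Real.sqrt (2 * Real.pi))⁻¹ * ∫ t : ℝ, Real.exp (-(1/2) * t ^ 2) := by
    rw [← MeasureTheory.integral_const_mul]
    congr 1; funext t; unfold phi; congr 1; ring_nf
  rw [h2, h, inv_mul_cancel₀ sqrt2pi_pos.ne']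

lemma Phi_eq (x : ℝ) : Phi x = ∫ t in Set.Iic x, phi t := rfl

lemma Phi_key (y : ℝ) : Phi y = Phi 0 + ∫ t in (0:ℝ)..y, phi t := by
  have := integral_Iic_sub_Iic (phi_integrable.integrableOn) (phi_integrable.integrableOn)
    (a := 0) (b := y) (μ := volume)
  rw [Phi_eq, Phi_eq]
  linarith [this]

lemma Phi_hasDerivAt (x : ℝ) : HasDerivAt Phi (phi x) x := by
  have hd : HasDerivAt (fun u => ∫ t in (0:ℝ)..u, phi t) (phi x) x :=
    integral_hasDerivAt_right (phi_integrable.intervalIntegrable)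
      (phi_cont.stronglyMeasurable.stronglyMeasurableAtFilter)
      phi_cont.continuousAt
  have : Phi = fun y => Phi 0 + ∫ t in (0:ℝ)..y, phi t := funext Phi_key
  rw [this]
  exact hd.const_add (Phi 0)

lemma Phi_strictMono : StrictMono Phi :=
  strictMono_of_deriv_pos fun x => by
    rw [(Phi_hasDerivAt x).deriv]; exact phi_pos x

lemma Phi_continuous : Continuous Phi := by
  have : Differentiable ℝ Phi := fun x => (Phi_hasDerivAt x).differentiableAt
  exact this.continuous

lemma Phi_tendsto_atTop : Tendsto Phi atTop (𝓝 1) := by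
  have h := (MeasureTheory.aecover_Iic (μ := volume) (l := atTop) (b := fun x : ℝ => x)
    tendsto_id).integral_tendsto_of_countably_generated phi_integrable
  rw [phi_integral] at h
  exact h

lemma Phi_tendsto_atBot : Tendsto Phi atBot (𝓝 0) := by
  have h := intervalIntegral_tendsto_integral_Iic (0:ℝ) (phi_integrable.integrableOn)
    (tendsto_id (α := ℝ) (x := atBot))
  have h2 : Tendsto (fun y : ℝ => Phi 0 - ∫ t in y..(0:ℝ), phi t) atBot (𝓝 (Phi 0 - Phi 0)) :=
    tendsto_const_nhds.sub (by rw [Phi_eq]; exact h)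
  rw [sub_self] at h2
  refine h2.congr fun y => ?_
  rw [Phi_key y, intervalIntegral.integral_symm]
  ring

lemma Phi_pos (x : ℝ) : 0 < Phi x := by
  have h0 : 0 ≤ Phi (x - 1) := by
    rw [Phi_eq]
    exact setIntegral_nonneg measurableSet_Iic fun t _ => (phi_pos t).le
  have h1 : 0 < ∫ t in (x-1)..x, phi t := by
    apply intervalIntegral.intervalIntegral_pos_of_pos_on
      (phi_integrable.intervalIntegrable) (fun t _ => phi_pos t) (by linarith)
  have := Phi_key x
  have := Phi_key (x - 1)
  have hsub := integral_Iic_sub_Iic (phi_integrable.integrableOn) (phi_integrable.integrableOn)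
    (a := x - 1) (b := x) (μ := volume)
  rw [← Phi_eq, ← Phi_eq] at hsub
  linarith

lemma Phi_lt_one (x : ℝ) : Phi x < 1 := by
  have h1 : 0 < Phi (x + 1) - Phi x := by
    have hsub := integral_Iic_sub_Iic (phi_integrable.integrableOn) (phi_integrable.integrableOn)
      (a := x) (b := x + 1) (μ := volume)
    rw [← Phi_eq, ← Phi_eq] at hsub
    have h2 : 0 < ∫ t in x..(x+1), phi t :=
      intervalIntegral.intervalIntegral_pos_of_pos_on
        (phi_integrable.intervalIntegrable) (fun t _ => phi_pos t) (by linarith)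
    linarith
  have h3 : Phi (x + 1) ≤ 1 := by
    -- Phi is monotone with limit 1 at +∞
    have hev : ∀ᶠ y in atTop, Phi (x + 1) ≤ Phi y := by
      filter_upwards [eventually_ge_atTop (x+1)] with y hy using Phi_strictMono.monotone hy
    exact ge_of_tendsto Phi_tendsto_atTop hev
  linarith

lemma Phi_mem (x : ℝ) : Phi x ∈ Set.Ioo (0:ℝ) 1 := ⟨Phi_pos x, Phi_lt_one x⟩

lemma Phi_surj {y : ℝ} (hy : y ∈ Set.Ioo (0:ℝ) 1) : ∃ x, Phi x = y := by
  obtain ⟨a, ha⟩ : ∃ a, Phi a < y := (Phi_tendsto_atBot.eventually_lt_const hy.1).exists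
  obtain ⟨b, hb⟩ : ∃ b, y < Phi b := (Phi_tendsto_atTop.eventually_const_lt hy.2).exists
  have hab : a ≤ b := (Phi_strictMono.lt_iff_lt.1 (ha.trans hb)).le
  have := intermediate_value_Icc hab Phi_continuous.continuousOn
  obtain ⟨x, _, hx⟩ := this ⟨ha.le, hb.le⟩
  exact ⟨x, hx⟩

lemma Phi_PhiInv {y : ℝ} (hy : y ∈ Set.Ioo (0:ℝ) 1) : Phi (PhiInv y) = y :=
  Function.invFun_eq (Phi_surj hy)

lemma PhiInv_Phi (x : ℝ) : PhiInv (Phi x) = x :=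
  Function.leftInverse_invFun Phi_strictMono.injective x

lemma PhiInv_lt {y z : ℝ} (hy : y ∈ Set.Ioo (0:ℝ) 1) (hz : z ∈ Set.Ioo (0:ℝ) 1)
    (h : y < z) : PhiInv y < PhiInv z := by
  rw [← Phi_PhiInv hy, ← Phi_PhiInv hz] at h
  exact Phi_strictMono.lt_iff_lt.1 h

lemma PhiInv_continuousAt {y : ℝ} (hy : y ∈ Set.Ioo (0:ℝ) 1) : ContinuousAt PhiInv y := by
  rw [ContinuousAt, tendsto_order]
  constructor
  · intro a ha
    have h1 : Phi a < y := by
      rw [← Phi_PhiInv hy]; exact Phi_strictMono ha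
    have hmem : ∀ᶠ z in 𝓝 y, z ∈ Set.Ioo (Phi a) 1 :=
      eventually_of_mem (isOpen_Ioo.mem_nhds ⟨h1, hy.2⟩) fun z hz => hz
    filter_upwards [hmem] with z hz
    have hz01 : z ∈ Set.Ioo (0:ℝ) 1 := ⟨(Phi_pos a).trans hz.1, hz.2⟩
    have : Phi a < Phi (PhiInv z) := by rw [Phi_PhiInv hz01]; exact hz.1
    exact Phi_strictMono.lt_iff_lt.1 this
  · intro b hb
    have h1 : y < Phi b := by
      rw [← Phi_PhiInv hy]; exact Phi_strictMono hb
    have hmem : ∀ᶠ z in 𝓝 y, z ∈ Set.Ioo (0:ℝ) (Phi b) :=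
      eventually_of_mem (isOpen_Ioo.mem_nhds ⟨hy.1, h1⟩) fun z hz => hz
    filter_upwards [hmem] with z hz
    have hz01 : z ∈ Set.Ioo (0:ℝ) 1 := ⟨hz.1, hz.2.trans (Phi_lt_one b)⟩
    have : Phi (PhiInv z) < Phi b := by rw [Phi_PhiInv hz01]; exact hz.2
    exact Phi_strictMono.lt_iff_lt.1 this

lemma PhiInv_hasDerivAt {y : ℝ} (hy : y ∈ Set.Ioo (0:ℝ) 1) :
    HasDerivAt PhiInv (phi (PhiInv y))⁻¹ y :=
  HasDerivAt.of_local_left_inverse (PhiInv_continuousAt hy) (Phi_hasDerivAt _)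
    (phi_pos _).ne'
    (eventually_of_mem (isOpen_Ioo.mem_nhds hy) fun z hz => Phi_PhiInv hz)

lemma Phi_zero : Phi 0 = 1/2 := by
  have heven : ∀ x : ℝ, phi (-x) = phi x := by
    intro x; unfold phi; rw [neg_sq]
  have h1 : Phi 0 + ∫ t in Set.Ioi (0:ℝ), phi t = 1 := by
    rw [Phi_eq, integral_Iic_add_Ioi phi_integrable.integrableOn phi_integrable.integrableOn,
      phi_integral]
  have h2 : (∫ t in Set.Ioi (0:ℝ), phi t) = Phi 0 := by
    have h3 := integral_comp_neg_Iic (0:ℝ) phi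
    rw [neg_zero] at h3
    rw [← h3, Phi_eq]
    exact setIntegral_congr_fun measurableSet_Iic fun t _ => heven t
  linarith

end Stmt5Aux

open Stmt5Aux

/-- For every `μ ≠ 0` and `ε ∈ (0,1)`, there is `c₀ > 0` such that the power function
`G(α) = Φ(Φ⁻¹(α/2) − μ) + Φ(Φ⁻¹(α/2) + μ)` satisfies `G''(α) ≤ −c₀` for all
`α ∈ (0, 1−ε)`, i.e. `G` is strongly concave on `(0, 1−ε)`. -/
theorem stmt_5 (μ : ℝ) (hμ : μ ≠ 0) (ε : ℝ) (hε : ε ∈ Set.Ioo (0 : ℝ) 1) :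
    ∃ c₀ > (0 : ℝ), ∀ α ∈ Set.Ioo (0 : ℝ) (1 - ε),
      deriv (deriv (fun a => Phi (PhiInv (a / 2) - μ) + Phi (PhiInv (a / 2) + μ))) α ≤ -c₀ := by
  obtain ⟨hε0, hε1⟩ := hε
  set f : ℝ → ℝ := fun a => Phi (PhiInv (a / 2) - μ) + Phi (PhiInv (a / 2) + μ) with hf
  set g : ℝ → ℝ := fun a => Real.exp (-μ^2/2) * Real.cosh (μ * PhiInv (a / 2)) with hg
  have hmem : ∀ α ∈ Set.Ioo (0:ℝ) 1, α/2 ∈ Set.Ioo (0:ℝ) 1 := fun α hα =>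
    ⟨by linarith [hα.1], by linarith [hα.2]⟩
  have hinner : ∀ α ∈ Set.Ioo (0:ℝ) 1, HasDerivAt (fun a : ℝ => PhiInv (a/2))
      ((phi (PhiInv (α/2)))⁻¹ * (1/2)) α := by
    intro α hα
    have h1 : HasDerivAt (fun a : ℝ => a/2) (1/2) α := by
      simpa using (hasDerivAt_id α).div_const 2
    have := (PhiInv_hasDerivAt (hmem α hα)).comp α h1
    simpa [Function.comp_def] using this
  have key : ∀ u v : ℝ, phi u * (phi v)⁻¹ = Real.exp (-u^2/2 - (-v^2/2)) := by
    intro u v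
    unfold phi
    rw [Real.exp_sub, mul_inv, inv_inv]
    have hc : Real.sqrt (2*Real.pi) ≠ 0 := sqrt2pi_pos.ne'
    have he : Real.exp (-v^2/2) ≠ 0 := (Real.exp_pos _).ne'
    field_simp
  have hfd : ∀ α ∈ Set.Ioo (0:ℝ) 1, HasDerivAt f (g α) α := by
    intro α hα
    have hI := hinner α hα
    have h2 : HasDerivAt (fun a : ℝ => PhiInv (a/2) - μ) ((phi (PhiInv (α/2)))⁻¹ * (1/2)) α :=
      hI.sub_const μ
    have h3 : HasDerivAt (fun a : ℝ => PhiInv (a/2) + μ) ((phi (PhiInv (α/2)))⁻¹ * (1/2)) α :=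
      hI.add_const μ
    have h4 : HasDerivAt (fun a : ℝ => Phi (PhiInv (a/2) - μ))
        (phi (PhiInv (α/2) - μ) * ((phi (PhiInv (α/2)))⁻¹ * (1/2))) α := by
      have := (Phi_hasDerivAt (PhiInv (α/2) - μ)).comp α h2
      simpa [Function.comp_def] using this
    have h5 : HasDerivAt (fun a : ℝ => Phi (PhiInv (a/2) + μ))
        (phi (PhiInv (α/2) + μ) * ((phi (PhiInv (α/2)))⁻¹ * (1/2))) α := by
      have := (Phi_hasDerivAt (PhiInv (α/2) + μ)).comp α h3
      simpa [Function.comp_def] using this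
    have h6 := h4.add h5
    have hval : g α = phi (PhiInv (α/2) - μ) * ((phi (PhiInv (α/2)))⁻¹ * (1/2))
        + phi (PhiInv (α/2) + μ) * ((phi (PhiInv (α/2)))⁻¹ * (1/2)) := by
      have e1 : phi (PhiInv (α/2) - μ) * (phi (PhiInv (α/2)))⁻¹
          = Real.exp (-μ^2/2) * Real.exp (μ * PhiInv (α/2)) := by
        rw [key, ← Real.exp_add]; congr 1; ring
      have e2 : phi (PhiInv (α/2) + μ) * (phi (PhiInv (α/2)))⁻¹
          = Real.exp (-μ^2/2) * Real.exp (-(μ * PhiInv (α/2))) := by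
        rw [key, ← Real.exp_add]; congr 1; ring
      show Real.exp (-μ^2/2) * Real.cosh (μ * PhiInv (α/2)) = _
      rw [Real.cosh_eq]
      linear_combination (-1/2 : ℝ) * e1 + (-1/2 : ℝ) * e2
    rw [hval]
    exact h6
  have hderiv_f : ∀ α ∈ Set.Ioo (0:ℝ) 1, deriv f α = g α := fun α hα => (hfd α hα).deriv
  have hgd : ∀ α ∈ Set.Ioo (0:ℝ) 1, HasDerivAt g
      (Real.exp (-μ^2/2) * (Real.sinh (μ * PhiInv (α/2)) *
        (μ * ((phi (PhiInv (α/2)))⁻¹ * (1/2))))) α := by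
    intro α hα
    have h1 := (hinner α hα).const_mul μ
    have h2 : HasDerivAt (fun a : ℝ => Real.cosh (μ * PhiInv (a/2)))
        (Real.sinh (μ * PhiInv (α/2)) * (μ * ((phi (PhiInv (α/2)))⁻¹ * (1/2)))) α := by
      have := (Real.hasDerivAt_cosh (μ * PhiInv (α/2))).comp α h1
      simpa [Function.comp_def, mul_assoc] using this
    exact h2.const_mul _
  -- the uniform bound
  set x₀ := PhiInv ((1-ε)/2) with hx0
  have hmem0 : (1-ε)/2 ∈ Set.Ioo (0:ℝ) 1 := ⟨by linarith, by linarith⟩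
  have hx0neg : x₀ < 0 := by
    have h : Phi x₀ < Phi 0 := by
      rw [hx0, Phi_PhiInv hmem0, Phi_zero]; linarith
    exact Phi_strictMono.lt_iff_lt.1 h
  have habs : (0:ℝ) < |μ| := abs_pos.2 hμ
  have hsinh0 : Real.sinh (|μ| * x₀) < 0 := by
    have h : |μ| * x₀ < 0 := mul_neg_of_pos_of_neg habs hx0neg
    have := Real.sinh_lt_sinh.2 h
    simpa using this
  set q := Real.sqrt (2 * Real.pi) with hq
  have hqpos : 0 < q := sqrt2pi_pos
  have hc0pos : 0 < Real.exp (-μ^2/2) * (|μ| * -Real.sinh (|μ| * x₀)) * (q / 2) :=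
    mul_pos (mul_pos (Real.exp_pos _) (mul_pos habs (neg_pos.2 hsinh0))) (by positivity)
  refine ⟨Real.exp (-μ^2/2) * (|μ| * -Real.sinh (|μ| * x₀)) * (q / 2), hc0pos, ?_⟩
  intro α hα
  have hα1 : α ∈ Set.Ioo (0:ℝ) 1 := ⟨hα.1, by linarith [hα.2]⟩
  set x := PhiInv (α/2) with hx
  -- second derivative computation
  have hev : deriv f =ᶠ[𝓝 α] g :=
    eventually_of_mem (isOpen_Ioo.mem_nhds hα1) fun z hz => hderiv_f z hz
  have hdd : deriv (deriv f) α = Real.exp (-μ^2/2) * (Real.sinh (μ * x) *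
      (μ * ((phi x)⁻¹ * (1/2)))) := by
    rw [hev.deriv_eq]
    exact (hgd α hα1).deriv
  rw [hdd]
  -- bound the expression
  have hxlt : x < x₀ := PhiInv_lt (hmem α hα1) hmem0 (by linarith [hα.2])
  have hSx : μ * Real.sinh (μ * x) = |μ| * Real.sinh (|μ| * x) := by
    rcases le_or_gt 0 μ with h | h
    · rw [abs_of_nonneg h]
    · rw [abs_of_neg h, show -μ * x = -(μ * x) from by ring, Real.sinh_neg]
      ring
  have hSle : |μ| * Real.sinh (|μ| * x) ≤ |μ| * Real.sinh (|μ| * x₀) :=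
    mul_le_mul_of_nonneg_left
      (Real.sinh_le_sinh.2 (mul_le_mul_of_nonneg_left hxlt.le (abs_nonneg μ)))
      (abs_nonneg μ)
  have hA0 : |μ| * Real.sinh (|μ| * x₀) ≤ 0 :=
    (mul_neg_of_pos_of_neg habs hsinh0).le
  have ht : q ≤ (phi x)⁻¹ := by
    rw [← inv_inv q]
    exact inv_anti₀ (phi_pos x) (phi_le x)
  have htpos : (0:ℝ) ≤ (phi x)⁻¹ := (inv_pos.2 (phi_pos x)).le
  have hE : (0:ℝ) ≤ Real.exp (-μ^2/2) := (Real.exp_pos _).le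
  calc Real.exp (-μ^2/2) * (Real.sinh (μ * x) * (μ * ((phi x)⁻¹ * (1/2))))
      = Real.exp (-μ^2/2) * ((μ * Real.sinh (μ * x)) * (phi x)⁻¹ / 2) := by ring
    _ = Real.exp (-μ^2/2) * ((|μ| * Real.sinh (|μ| * x)) * (phi x)⁻¹ / 2) := by rw [hSx]
    _ ≤ Real.exp (-μ^2/2) * ((|μ| * Real.sinh (|μ| * x₀)) * q / 2) := by
        apply mul_le_mul_of_nonneg_left _ hE
        have h1 : (|μ| * Real.sinh (|μ| * x)) * (phi x)⁻¹
            ≤ (|μ| * Real.sinh (|μ| * x₀)) * (phi x)⁻¹ :=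
          mul_le_mul_of_nonneg_right hSle htpos
        have h2 : (|μ| * Real.sinh (|μ| * x₀)) * (phi x)⁻¹
            ≤ (|μ| * Real.sinh (|μ| * x₀)) * q :=
          mul_le_mul_of_nonpos_left ht hA0
        linarith
    _ = -(Real.exp (-μ^2/2) * (|μ| * -Real.sinh (|μ| * x₀)) * (q / 2)) := by ring
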